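/- For every real x ≥ 0, (2x/3 + 1)^{2x+3} ≤ (2x + 1)^{2x+1}; equivalently, for every real u ≥ 1, (u+2)·(log(u+2) − log 3) ≤ u·log u. -/

import Mathlib

private lemma hasDerivAt_aux (u : ℝ) (hu : 0 < u) :
    HasDerivAt (fun u : ℝ => u * Real.log u - (u + 2) * (Real.log (u + 2) - Real.log 3))
      (Real.log u - Real.log (u + 2) + Real.log 3) u := by
  have hu2 : u + 2 ≠ 0 := by linarith
  have h1 : HasDerivAt (fun u : ℝ => u * Real.log u) (Real.log u + 1) u := by
    have := (hasDerivAt_id u).mul (Real.hasDerivAt_log hu.ne')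
    refine this.congr_deriv ?_
    simp [hu.ne']
  have hlog : HasDerivAt (fun u : ℝ => Real.log (u + 2) - Real.log 3) (1 / (u + 2)) u := by
    have := (Real.hasDerivAt_log hu2).comp u ((hasDerivAt_id u).add_const 2)
    simpa using this.sub_const (Real.log 3)
  have h2 : HasDerivAt (fun u : ℝ => (u + 2) * (Real.log (u + 2) - Real.log 3))
      (Real.log (u + 2) - Real.log 3 + 1) u := by
    have := ((hasDerivAt_id u).add_const 2).mul hlog
    refine this.congr_deriv ?_
    simp [hu2]
  refine (h1.sub h2).congr_deriv ?_
  ring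

private lemma key_ineq : ∀ u : ℝ, 1 ≤ u →
    (u + 2) * (Real.log (u + 2) - Real.log 3) ≤ u * Real.log u := by
  intro u hu
  set f : ℝ → ℝ := fun u => u * Real.log u - (u + 2) * (Real.log (u + 2) - Real.log 3) with hf
  have hmono : MonotoneOn f (Set.Ici 1) := by
    apply monotoneOn_of_deriv_nonneg (convex_Ici 1)
    · intro v hv
      have hv' : (0:ℝ) < v := lt_of_lt_of_le one_pos hv
      exact (hasDerivAt_aux v hv').continuousAt.continuousWithinAt
    · intro v hv
      rw [interior_Ici] at hv
      have hv' : (0:ℝ) < v := lt_trans one_pos hv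
      exact (hasDerivAt_aux v hv').differentiableAt.differentiableWithinAt
    · intro v hv
      rw [interior_Ici] at hv
      have hv1 : (1:ℝ) < v := hv
      have hv' : (0:ℝ) < v := lt_trans one_pos hv1
      rw [(hasDerivAt_aux v hv').deriv]
      have h1 : Real.log (v + 2) ≤ Real.log (3 * v) :=
        Real.log_le_log (by linarith) (by linarith)
      rw [Real.log_mul (by norm_num) hv'.ne'] at h1
      linarith
  have h0 : f 1 = 0 := by
    show 1 * Real.log 1 - (1 + 2) * (Real.log (1 + 2) - Real.log 3) = 0
    norm_num
  have := hmono (Set.self_mem_Ici) (Set.mem_Ici.mpr hu) hu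
  rw [h0] at this
  simpa [hf] using this

theorem elementary_inequality :
    (∀ x : ℝ, 0 ≤ x →
      (2 * x / 3 + 1) ^ (2 * x + 3) ≤ (2 * x + 1) ^ (2 * x + 1)) ∧
    (∀ u : ℝ, 1 ≤ u →
      (u + 2) * (Real.log (u + 2) - Real.log 3) ≤ u * Real.log u) := by
  refine ⟨?_, key_ineq⟩
  intro x hx
  have hb1 : (0:ℝ) < 2 * x / 3 + 1 := by linarith
  have hb2 : (0:ℝ) < 2 * x + 1 := by linarith
  have h := key_ineq (2 * x + 1) (by linarith)
  rw [Real.rpow_def_of_pos hb1, Real.rpow_def_of_pos hb2, Real.exp_le_exp]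
  have e2 : Real.log (2 * x / 3 + 1) = Real.log (2 * x + 1 + 2) - Real.log 3 := by
    rw [show (2 * x / 3 + 1) = (2 * x + 1 + 2) / 3 by ring,
      Real.log_div (by linarith) (by norm_num)]
  rw [e2]
  nlinarith [h]
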